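/- Let R be a CG-ring of odd characteristic, K ≤ R^× a pure subgroup, and J an ideal of R with J_p ≠ R_p for every prime p dividing the characteristic of R. Then the image π_J(K) of K in R/J is a pure subgroup of (R/J)^×, and the set c_J·K is pure in R, where c_J is the characteristic of J. -/

import Mathlib

open Pointwise

/-- A Galois ring: a finite commutative local ring whose radical is `pR` for a prime `p`. -/
def IsGaloisRing (R : Type*) [CommRing R] : Prop :=
  ∃ p : ℕ, p.Prime ∧ IsLocalRing R ∧ nilradical R = Ideal.span {(p : R)}

/-- A CG-ring: a finite commutative ring isomorphic to a product of Galois rings of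
pairwise coprime characteristics. -/
def IsCGRing (R : Type*) [CommRing R] : Prop :=
  ∃ (n : ℕ) (S : Fin n → Type) (instR : ∀ i, CommRing (S i)) (_ : ∀ i, Fintype (S i)),
    letI : ∀ i, CommRing (S i) := instR
    (∀ i, IsGaloisRing (S i)) ∧
    (∀ i j, i ≠ j → Nat.Coprime (ringChar (S i)) (ringChar (S j))) ∧
    Nonempty (R ≃+* ∀ i, S i)

/-- A nonempty subset `X` of a ring is pure if `X + I = X` forces `I = 0`. -/
def IsPureSet {R : Type*} [CommRing R] (X : Set R) : Prop :=
  ∀ I : Ideal R, X + (I : Set R) = X → I = ⊥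

open Ideal Finset


lemma my_nilpotent_of_mem_jacobson {R : Type*} [CommRing R] [Finite R] {x : R}
    (hx : x ∈ Ideal.jacobson (⊥ : Ideal R)) : IsNilpotent x := by
  obtain ⟨i, j, hij, hne⟩ : ∃ i j : ℕ, x ^ i = x ^ j ∧ i < j := by
    obtain ⟨i, j, hne, h⟩ := Finite.exists_ne_map_eq_of_infinite (fun n : ℕ => x ^ n)
    rcases Nat.lt_or_gt_of_ne hne with h' | h'
    · exact ⟨i, j, h, h'⟩
    · exact ⟨j, i, h.symm, h'⟩
  have h1 : IsUnit (1 - x ^ (j - i)) := by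
    have := (Ideal.mem_jacobson_bot.mp hx) (-(x ^ (j - i - 1)))
    have hexp : x * -x ^ (j - i - 1) + 1 = 1 - x ^ (j - i) := by
      have h2 : x * x ^ (j - i - 1) = x ^ (j - i) := by
        rw [← pow_succ']; congr 1; omega
      rw [← h2]; ring
    rwa [hexp] at this
  refine ⟨i, ?_⟩
  have hz : x ^ i * (1 - x ^ (j - i)) = 0 := by
    have h3 : x ^ i * x ^ (j - i) = x ^ j := by rw [← pow_add]; congr 1; omega
    rw [mul_sub, mul_one, h3, hij]; ring
  obtain ⟨u, hu⟩ := h1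
  calc x ^ i = x ^ i * (1 - x ^ (j-i)) * ↑u⁻¹ := by
        rw [← hu, mul_assoc, u.mul_inv, mul_one]
    _ = 0 := by rw [hz, zero_mul]


/-- Binomial identity: for `p` an odd prime and `t` divisible by `p`,
`(1+t)^p = 1 + p*t*(1+z)` with `p ∣ z`. -/
lemma my_odd_pow_identity {T : Type*} [CommRing T] {p : ℕ} (hp : p.Prime) (hodd : Odd p)
    {t : T} (ht : (p:T) ∣ t) :
    ∃ z : T, (p:T) ∣ z ∧ (1+t)^p = 1 + (p:T)*t*(1+z) := by
  obtain ⟨t₀, ht₀⟩ := ht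
  have hp3 : 3 ≤ p := by rcases hodd with ⟨k,hk⟩; have := hp.two_le; omega
  set z : T := ∑ m ∈ Ico 2 (p+1), t₀ * t^(m-2) * (p.choose m : T) with hz
  have hdvd : (p:T) ∣ z := by
    apply Finset.dvd_sum
    intro m hm
    simp only [Finset.mem_Ico] at hm
    rcases eq_or_lt_of_le (Nat.le_of_lt_succ hm.2) with h | h
    · -- m = p
      have hm2 : 1 ≤ m - 2 := by omega
      have : (p:T) ∣ t^(m-2) := by
        refine dvd_trans ⟨t₀, ht₀⟩ (dvd_pow_self t (by omega))
      exact Dvd.dvd.mul_right (Dvd.dvd.mul_left this t₀) _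
    · -- m < p, so p ∣ choose
      have : (p:ℕ) ∣ p.choose m := hp.dvd_choose_self (by omega) (by omega)
      exact Dvd.dvd.mul_left (by exact_mod_cast Nat.cast_dvd_cast this) _
  refine ⟨z, hdvd, ?_⟩
  have key := add_pow t 1 p
  have hsplit : Finset.range (p+1) = insert 0 (insert 1 (Ico 2 (p+1))) := by
    ext m; simp [Finset.mem_range, Finset.mem_Ico]; omega
  rw [hsplit] at key
  rw [Finset.sum_insert (by simp), Finset.sum_insert (by simp)] at key
  have hrest : ∑ m ∈ Ico 2 (p+1), t^m * 1^(p-m) * (p.choose m : T) = (p:T) * t * z := by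
    rw [hz, Finset.mul_sum]
    apply Finset.sum_congr rfl
    intro m hm
    simp only [Finset.mem_Ico] at hm
    have hm2 : 2 ≤ m := hm.1
    have : t^m = t * t * t^(m-2) := by
      rw [← pow_two, ← pow_add]; congr 1; omega
    rw [this, one_pow, ht₀]; ring
  rw [hrest] at key
  have : (1:T) + t = t + 1 := by ring
  rw [this, key]
  simp [Nat.choose_one_right]
  ring

section LocalPow
variable {T : Type*} [CommRing T] {p : ℕ}

lemma my_pow_one_add (hp : p.Prime) (hodd : Odd p) {b : ℕ} (hb : 1 ≤ b) (d : ℕ) {t : T}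
    (ht : (p:T)^b ∣ t) :
    ∃ s : T, (p:T)^(b+d) ∣ s ∧ (1+t)^(p^d) = 1 + s := by
  induction d with
  | zero => exact ⟨t, by simpa using ht, by simp⟩
  | succ d ih =>
    obtain ⟨s, hs, hpow⟩ := ih
    have hps : (p:T) ∣ s := (dvd_pow_self (p:T) (by omega : b+d ≠ 0)).trans hs
    obtain ⟨z, hz, hzpow⟩ := my_odd_pow_identity hp hodd hps
    refine ⟨(p:T)*s*(1+z), ?_, ?_⟩
    · have hdvd1 : (p:T)^(b+(d+1)) ∣ (p:T)*s := by
        have h2 : (p:T)^(b+(d+1)) = (p:T) * (p:T)^(b+d) := by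
          rw [← pow_succ']
          congr 1
        rw [h2]
        exact mul_dvd_mul_left _ hs
      exact hdvd1.mul_right _
    · rw [pow_succ, pow_mul, hpow, hzpow]

lemma my_pow_eq_one (hp : p.Prime) (hodd : Odd p) {n : ℕ} (hn : (p:T)^n = 0)
    {b d : ℕ} (hb : 1 ≤ b) (hbd : n ≤ b + d) {t : T} (ht : (p:T)^b ∣ t) :
    (1+t)^(p^d) = 1 := by
  obtain ⟨s, hs, hpow⟩ := my_pow_one_add hp hodd hb d ht
  have : (p:T)^(b+d) = 0 := by
    have : (p:T)^(b+d) = (p:T)^n * (p:T)^(b+d-n) := by rw [← pow_add]; congr 1; omega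
    rw [this, hn, zero_mul]
  obtain ⟨r, hr⟩ := hs
  rw [hpow, hr, this, zero_mul, add_zero]

lemma my_pow_lift (hp : p.Prime) (hodd : Odd p) {n : ℕ} (hn : (p:T)^n = 0)
    {k : ℕ} (hk : 1 ≤ k) {y : T} (hy : (p:T)^(k+1) ∣ y) :
    ∃ t : T, (p:T)^k ∣ t ∧ (1+t)^p = 1 + y := by
  have key : ∀ d : ℕ, ∃ t δ : T, (p:T)^k ∣ t ∧ (p:T)^(k+1+d) ∣ δ ∧ (1+t)^p * (1+δ) = 1+y := by
    intro d
    induction d with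
    | zero => exact ⟨0, y, dvd_zero _, by simpa using hy, by simp⟩
    | succ d ih =>
      obtain ⟨t, δ, htk, hδ, heq⟩ := ih
      obtain ⟨w, hw⟩ := hδ
      set s : T := (p:T)^(k+d) * w with hsdef
      have hps : (p:T) ∣ s := (dvd_pow_self (p:T) (by omega : k+d ≠ 0)).trans ⟨w, rfl⟩
      have hpsδ : (p:T) * s = δ := by
        rw [hsdef, hw, ← mul_assoc, ← pow_succ']
        congr 2
        omega
      obtain ⟨z, hz, hzpow⟩ := my_odd_pow_identity hp hodd hps
      -- A = (1+s)^p = 1 + δ(1+z)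
      have hA : (1+s)^p = (1+δ) + δ*z := by rw [hzpow, hpsδ]; ring
      have hδnil0 : IsNilpotent δ := by
        refine ⟨n, ?_⟩
        rw [hw, mul_pow, ← pow_mul, mul_comm (k+1+d) n, pow_mul, hn]
        simp
      have hδnil : IsNilpotent (δ*(1+z)) := (Commute.all δ (1+z)).isNilpotent_mul_right hδnil0
      have hAunit : IsUnit ((1+s)^p) := by
        rw [hA]
        have : (1+δ) + δ*z = 1 + δ*(1+z) := by ring
        rw [this]
        exact hδnil.isUnit_one_add
      set u := hAunit.unit with hu
      have hkey : ((1+s)^p) * (1 + (↑u⁻¹ : T) * (-(δ*z))) = 1 + δ := by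
        have huval : ((u:Tˣ) : T) = (1+s)^p := rfl
        rw [← huval]
        have hexp : (u:T) * (1 + (↑u⁻¹:T) * (-(δ*z))) = (u:T) + ((u:T) * (↑u⁻¹:T)) * (-(δ*z)) := by
          ring
        rw [hexp, Units.mul_inv, huval, hA]
        ring
      refine ⟨t + s + t*s, (↑u⁻¹ : T) * (-(δ*z)), ?_, ?_, ?_⟩
      · refine dvd_add (dvd_add htk ?_) (htk.mul_right s)
        exact (pow_dvd_pow (p:T) (by omega : k ≤ k+d)).trans ⟨w, rfl⟩
      · have h1 : (p:T)^(k+1+d+1) ∣ δ*z := by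
          rw [pow_succ, hw]
          exact mul_dvd_mul ⟨w, rfl⟩ hz
        exact (dvd_neg.mpr h1).mul_left _
      · have hfac : (1 + (t + s + t*s)) = (1+t)*(1+s) := by ring
        calc (1 + (t + s + t*s))^p * (1 + (↑u⁻¹ : T) * (-(δ*z)))
            = (1+t)^p * ((1+s)^p * (1 + (↑u⁻¹ : T) * (-(δ*z)))) := by rw [hfac, mul_pow]; ring
          _ = (1+t)^p * (1+δ) := by rw [hkey]
          _ = 1 + y := heq
  obtain ⟨t, δ, htk, hδ, heq⟩ := key n
  have hδ0 : δ = 0 := by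
    obtain ⟨w, hw⟩ := hδ
    have : (p:T)^(k+1+n) = 0 := by
      have : (p:T)^(k+1+n) = (p:T)^n * (p:T)^(k+1) := by rw [← pow_add]; congr 1; omega
      rw [this, hn, zero_mul]
    rw [hw, this, zero_mul]
  rw [hδ0, add_zero, mul_one] at heq
  exact ⟨t, htk, heq⟩

lemma my_pow_surj (hp : p.Prime) (hodd : Odd p) {n : ℕ} (hn : (p:T)^n = 0)
    {a : ℕ} (ha : 1 ≤ a) (d : ℕ) {y : T} (hy : (p:T)^a ∣ y) :
    ∃ x : T, (p:T)^a ∣ x ∧ (1+x)^(p^d) = 1 + (p:T)^d * y := by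
  induction d generalizing y with
  | zero => exact ⟨y, hy, by simp⟩
  | succ d ih =>
    have h1 : (p:T)^(a+d+1) ∣ (p:T)^(d+1) * y := by
      have : (p:T)^(a+d+1) = (p:T)^(d+1) * (p:T)^a := by rw [← pow_add]; congr 1; omega
      rw [this]
      exact mul_dvd_mul_left _ hy
    obtain ⟨t, htad, hteq⟩ := my_pow_lift hp hodd hn (by omega : 1 ≤ a+d) h1
    obtain ⟨r, hr⟩ := htad
    have hy2 : (p:T)^a ∣ (p:T)^a * r := ⟨r, rfl⟩
    obtain ⟨x, hx, hxeq⟩ := ih hy2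
    refine ⟨x, hx, ?_⟩
    have ht' : (p:T)^d * ((p:T)^a * r) = t := by rw [hr, ← mul_assoc, ← pow_add]; congr 2; omega
    rw [pow_succ, pow_mul, hxeq, ht', hteq, pow_succ]
end LocalPow

section Component
variable {T : Type*} [CommRing T] {p : ℕ}

open Ideal

/-- In a finite local ring with nilradical `(p)`, the maximal ideal is `(p)`. -/
lemma my_maximalIdeal_eq {p : ℕ} [Fintype T] (hloc : IsLocalRing T)
    (hnil : nilradical T = span {(p:T)}) :
    IsLocalRing.maximalIdeal T = span {(p:T)} := by
  haveI := hloc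
  apply le_antisymm
  · intro x hx
    rw [← hnil, mem_nilradical]
    apply my_nilpotent_of_mem_jacobson
    rw [IsLocalRing.jacobson_eq_maximalIdeal ⊥ bot_ne_top]
    exact hx
  · rw [span_le, Set.singleton_subset_iff]
    have hpnil : IsNilpotent (p:T) := by
      rw [← mem_nilradical, hnil]
      exact mem_span_singleton_self _
    refine IsLocalRing.mem_maximalIdeal _ |>.mpr (fun hu => ?_)
    obtain ⟨k, hk⟩ := hpnil
    have h2 := hu.pow k
    rw [hk, isUnit_zero_iff] at h2
    exact one_ne_zero h2.symm

lemma my_span_p_ne_top [Nontrivial T] {n : ℕ} (hn0 : (p:T)^n = 0) :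
    (span {(p:T)} : Ideal T) ≠ ⊤ := by
  intro h
  have h1 : (1:T) ∈ span {(p:T)} := h ▸ Submodule.mem_top
  obtain ⟨r, hr⟩ := mem_span_singleton.mp h1
  have : (1:T) = 0 := by
    calc (1:T) = 1^n := (one_pow n).symm
      _ = ((p:T)*r)^n := by rw [← hr]
      _ = (p:T)^n * r^n := mul_pow _ _ _
      _ = 0 := by rw [hn0, zero_mul]
  exact one_ne_zero this

lemma my_ideal_classify [Fintype T] (hloc : IsLocalRing T)
    (hnil : nilradical T = span {(p:T)}) {n : ℕ} (hn0 : (p:T)^n = 0) (W : Ideal T) :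
    ∃ b ≤ n, W = span {(p:T)^b} := by
  haveI := hloc
  classical
  by_cases hbot : W = ⊥
  · refine ⟨n, le_rfl, ?_⟩
    rw [hbot, hn0, span_singleton_eq_bot.mpr rfl]
  · have hPn : ¬ W ≤ span {(p:T)^n} := by
      intro h
      rw [hn0] at h
      exact hbot (le_bot_iff.mp (by rwa [span_singleton_eq_bot.mpr rfl] at h))
    have hex : ∃ b, ¬ W ≤ span {(p:T)^b} := ⟨n, hPn⟩
    set b₀ := Nat.find hex with hb₀
    have hspec : ¬ W ≤ span {(p:T)^b₀} := Nat.find_spec hex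
    have hb₀pos : 0 < b₀ := by
      rcases Nat.eq_zero_or_pos b₀ with h | h
      · exfalso; apply hspec; rw [h]; simp
      · exact h
    have hb₀n : b₀ ≤ n := Nat.find_le hPn
    set b := b₀ - 1 with hbdef
    have hWb : W ≤ span {(p:T)^b} := by
      by_contra hcon
      have h2 : b₀ ≤ b := Nat.find_le hcon
      omega
    have hnotb1 : ¬ W ≤ span {(p:T)^(b+1)} := by
      have : b + 1 = b₀ := by omega
      rw [this]; exact hspec
    obtain ⟨x, hxW, hxnot⟩ := SetLike.not_le_iff_exists.mp hnotb1
    obtain ⟨u, hu⟩ := mem_span_singleton.mp (hWb hxW)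
    have huunit : IsUnit u := by
      by_contra hnu
      apply hxnot
      have hum : u ∈ IsLocalRing.maximalIdeal T := hnu
      rw [my_maximalIdeal_eq hloc hnil] at hum
      obtain ⟨v, hv⟩ := mem_span_singleton.mp hum
      rw [mem_span_singleton, hu, hv, pow_succ]
      exact ⟨v, by ring⟩
    obtain ⟨uu, huu⟩ := huunit
    refine ⟨b, by omega, le_antisymm hWb ?_⟩
    rw [span_le, Set.singleton_subset_iff]
    have : (p:T)^b = x * ↑uu⁻¹ := by
      rw [hu, ← huu, mul_assoc, Units.mul_inv, mul_one]
    rw [this]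
    exact W.mul_mem_right _ hxW

lemma my_char_iff [Fintype T] (hloc : IsLocalRing T) (hp : p.Prime) {n : ℕ}
    (hn0 : (p:T)^n = 0) (hmin : ∀ j, (p:T)^j = 0 → n ≤ j) (e : ℕ) :
    ((e : ℕ) : T) = 0 ↔ p^n ∣ e := by
  haveI := hloc
  have h1 : ringChar T ∣ p^n := ringChar.dvd (by push_cast; exact hn0)
  obtain ⟨j, hjn, hq⟩ := (Nat.dvd_prime_pow hp).mp h1
  have h2 : ((p^j : ℕ) : T) = 0 := by rw [← hq]; exact (ringChar.spec T (ringChar T)).mpr dvd_rfl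
  have h3 : n ≤ j := hmin j (by push_cast at h2; exact h2)
  have hqn : ringChar T = p^n := by rw [hq]; congr 1; omega
  rw [← hqn]
  exact ringChar.spec T e

lemma my_ann [Fintype T] (hloc : IsLocalRing T) (hnil : nilradical T = span {(p:T)})
    {n : ℕ} (hn0 : (p:T)^n = 0) (hmin : ∀ j, (p:T)^j = 0 → n ≤ j)
    {b : ℕ} (hb : b ≤ n) (x : T) :
    (p:T)^(n-b) * x = 0 ↔ (p:T)^b ∣ x := by
  constructor
  · intro h
    obtain ⟨k, hk, hW⟩ := my_ideal_classify hloc hnil hn0 (span {x})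
    have hxk : (p:T)^k ∣ x := mem_span_singleton.mp (hW ▸ mem_span_singleton_self x)
    have hkx : x ∣ (p:T)^k := mem_span_singleton.mp (hW ▸ mem_span_singleton_self ((p:T)^k))
    obtain ⟨r, hr⟩ := hkx
    have h2 : (p:T)^(n-b+k) = 0 := by
      rw [pow_add, hr, ← mul_assoc, h, zero_mul]
    have h3 : n ≤ n - b + k := hmin _ h2
    have hbk : b ≤ k := by omega
    exact (pow_dvd_pow (p:T) hbk).trans hxk
  · rintro ⟨r, rfl⟩
    rw [← mul_assoc, ← pow_add]
    have : n - b + b = n := by omega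
    rw [this, hn0, zero_mul]

lemma my_exponent [Fintype T] (hloc : IsLocalRing T) (hp : p.Prime)
    (hnil : nilradical T = span {(p:T)})
    {n : ℕ} (hn0 : (p:T)^n = 0) (hmin : ∀ j, (p:T)^j = 0 → n ≤ j)
    {b : ℕ} (hb : b ≤ n) :
    AddMonoid.exponent ↥(span {(p:T)^b} : Ideal T) = p^(n-b) := by
  apply Nat.dvd_antisymm
  · apply AddMonoid.exponent_dvd_of_forall_nsmul_eq_zero
    intro g
    have hg : (p:T)^b ∣ (g : T) := mem_span_singleton.mp g.2
    have : (p^(n-b) : ℕ) • (g:T) = 0 := by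
      rw [nsmul_eq_mul]
      push_cast
      exact (my_ann hloc hnil hn0 hmin hb (g:T)).mpr hg
    exact Subtype.ext (by push_cast; exact_mod_cast this)
  · have hmem : (p:T)^b ∈ (span {(p:T)^b} : Ideal T) := mem_span_singleton_self _
    have h1 := AddMonoid.exponent_nsmul_eq_zero (⟨(p:T)^b, hmem⟩ : ↥(span {(p:T)^b} : Ideal T))
    set e := AddMonoid.exponent ↥(span {(p:T)^b} : Ideal T)
    have h2 : ((e * p^b : ℕ) : T) = 0 := by
      have h3 : (e • ((p:T)^b)) = 0 := congrArg Subtype.val h1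
      rw [nsmul_eq_mul] at h3
      push_cast
      exact h3
    have h4 : p^n ∣ e * p^b := (my_char_iff hloc hp hn0 hmin _).mp h2
    have h5 : p^(n-b) * p^b ∣ e * p^b := by
      rw [← pow_add]
      have : n - b + b = n := by omega
      rw [this]
      exact h4
    exact (Nat.mul_dvd_mul_iff_right (Nat.pow_pos hp.pos)).mp h5

lemma my_nat_inv {m q : ℕ} (hm : Nat.Coprime m q) (hm1 : 1 ≤ m) :
    ∃ m' l, m * m' = q * l + 1 := by
  rcases Nat.lt_or_ge q 2 with hq | hq
  · interval_cases q
    · have : m = 1 := by simpa [Nat.coprime_zero_right] using hm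
      exact ⟨1, 0, by omega⟩
    · exact ⟨1, m - 1, by omega⟩
  · obtain ⟨m', -, hm'⟩ := Nat.exists_mul_mod_eq_one_of_coprime hm (by omega)
    refine ⟨m', m * m' / q, ?_⟩
    have := Nat.div_add_mod (m * m') q
    omega

lemma my_pow_one_add_dvd {w x : T} (hx : w ∣ x) (e : ℕ) :
    ∃ s, w ∣ s ∧ (1+x)^e = 1+s := by
  induction e with
  | zero => exact ⟨0, dvd_zero _, by simp⟩
  | succ e ih =>
    obtain ⟨s, hs, hpow⟩ := ih
    refine ⟨s + x + s*x, dvd_add (dvd_add hs hx) (hs.mul_right _), ?_⟩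
    rw [pow_succ, hpow]
    ring

lemma my_component [Fintype T] (hloc : IsLocalRing T) (hp : p.Prime)
    (hodd : Odd p) (hnil : nilradical T = span {(p:T)})
    {Jc Ic : Ideal T} (hJI : Jc ≤ Ic) (hIc : Ic ≤ span {(p:T)})
    {c m : ℕ} (hc : c = AddMonoid.exponent ↥Jc * m) (hmp : Nat.Coprime m p) :
    (∀ x : T, (c:T) * x = 0 ↔ x ∈ Jc) ∧ (∀ j ∈ Jc, (1+j)^c = 1) ∧
    (∀ y ∈ Ic, ∃ x ∈ Ic, (1+x)^c = 1 + (c:T)*y) := by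
  haveI := hloc
  classical
  have hpnilp : IsNilpotent (p:T) := by
    rw [← mem_nilradical, hnil]; exact mem_span_singleton_self _
  have hex : ∃ n, (p:T)^n = 0 := hpnilp
  set n := Nat.find hex with hndef
  have hn0 : (p:T)^n = 0 := Nat.find_spec hex
  have hmin : ∀ j, (p:T)^j = 0 → n ≤ j := fun j hj => Nat.find_le hj
  have hn1 : 1 ≤ n := by
    by_contra h
    have : n = 0 := by omega
    rw [this, pow_zero] at hn0
    exact one_ne_zero hn0
  have hspan_ne_top : (span {(p:T)} : Ideal T) ≠ ⊤ := my_span_p_ne_top hn0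
  obtain ⟨b, hbn, hJb⟩ := my_ideal_classify hloc hnil hn0 Jc
  obtain ⟨a, han, hIa⟩ := my_ideal_classify hloc hnil hn0 Ic
  have hb1 : 1 ≤ b := by
    by_contra h
    have hb0 : b = 0 := by omega
    rw [hb0, pow_zero] at hJb
    apply hspan_ne_top
    rw [eq_top_iff]
    calc (⊤ : Ideal T) = span {(1:T)} := by rw [span_singleton_one]
      _ = Jc := hJb.symm
      _ ≤ Ic := hJI
      _ ≤ span {(p:T)} := hIc
  have ha1 : 1 ≤ a := by
    by_contra h
    have ha0 : a = 0 := by omega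
    rw [ha0, pow_zero] at hIa
    apply hspan_ne_top
    rw [eq_top_iff]
    calc (⊤ : Ideal T) = span {(1:T)} := by rw [span_singleton_one]
      _ = Ic := hIa.symm
      _ ≤ span {(p:T)} := hIc
  have hcJ : AddMonoid.exponent ↥Jc = p^(n-b) := by
    rw [hJb]; exact my_exponent hloc hp hnil hn0 hmin hbn
  rw [hcJ] at hc
  have hm1 : 1 ≤ m := by
    rcases Nat.eq_zero_or_pos m with h | h
    · exfalso
      rw [h] at hmp
      exact hp.one_lt.ne' (by simpa [Nat.coprime_zero_left] using hmp)
    · exact h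
  have hcastc : (c : T) = (p:T)^(n-b) * (m:T) := by rw [hc]; push_cast; ring
  obtain ⟨m₁, l₁, hm₁⟩ := my_nat_inv (hmp.pow_right n) hm1
  refine ⟨?_, ?_, ?_⟩
  · -- Ann
    intro x
    constructor
    · intro hcx
      have h1 : (m₁:T) * ((c:T) * x) = 0 := by rw [hcx, mul_zero]
      have h2 : (m₁:T) * (c:T) = ((m * m₁ : ℕ) : T) * (p:T)^(n-b) := by
        rw [hcastc]; push_cast; ring
      have h3 : ((m * m₁ : ℕ) : T) = 1 := by
        rw [hm₁]; push_cast; rw [hn0]; ring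
      rw [← mul_assoc, h2, h3, one_mul] at h1
      have h4 : (p:T)^b ∣ x := (my_ann hloc hnil hn0 hmin hbn x).mp h1
      rw [hJb, mem_span_singleton]
      exact h4
    · intro hx
      rw [hJb, mem_span_singleton] at hx
      have h1 : (p:T)^(n-b) * x = 0 := (my_ann hloc hnil hn0 hmin hbn x).mpr hx
      rw [hcastc, mul_comm ((p:T)^(n-b)) ((m:T)), mul_assoc, h1, mul_zero]
  · -- pow eq one
    intro j hj
    rw [hJb, mem_span_singleton] at hj
    rw [hc, pow_mul]
    rw [my_pow_eq_one hp hodd hn0 hb1 (by omega : n ≤ b + (n-b)) hj, one_pow]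
  · -- surjectivity
    intro y hy
    rw [hIa, mem_span_singleton] at hy
    have hy' : (p:T)^a ∣ (m:T) * y := hy.mul_left _
    obtain ⟨x₁, hx₁dvd, hx₁⟩ := my_pow_surj hp hodd hn0 ha1 (n-b) hy'
    obtain ⟨m₂, l₂, hm₂⟩ := my_nat_inv (hmp.pow_right (n-1)) hm1
    obtain ⟨s, hsdvd, hspow⟩ := my_pow_one_add_dvd hx₁dvd m₂
    have hx₁p : (p:T)^1 ∣ x₁ := (pow_dvd_pow (p:T) ha1).trans hx₁dvd
    have hsm : (1+s)^m = 1 + x₁ := by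
      rw [← hspow, ← pow_mul]
      have h5 : m₂ * m = p^(n-1) * l₂ + 1 := by rw [mul_comm]; exact hm₂
      rw [h5, pow_add, pow_one, pow_mul]
      rw [my_pow_eq_one hp hodd hn0 le_rfl (by omega : n ≤ 1 + (n-1)) hx₁p, one_pow, one_mul]
    refine ⟨s, ?_, ?_⟩
    · rw [hIa, mem_span_singleton]; exact hsdvd
    · have h6 : c = m * p^(n-b) := by rw [hc]; ring
      rw [h6, pow_mul, hsm, hx₁]
      push_cast
      ring

lemma my_ringChar_eq [Fintype T] (hloc : IsLocalRing T) (hp : p.Prime)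
    (hnil : nilradical T = span {(p:T)}) :
    ∃ n, 1 ≤ n ∧ ringChar T = p^n ∧
      ∀ Jc : Ideal T, AddMonoid.exponent ↥Jc ∣ p^n := by
  haveI := hloc
  classical
  have hpnilp : IsNilpotent (p:T) := by
    rw [← mem_nilradical, hnil]; exact mem_span_singleton_self _
  have hex : ∃ n, (p:T)^n = 0 := hpnilp
  set n := Nat.find hex with hndef
  have hn0 : (p:T)^n = 0 := Nat.find_spec hex
  have hmin : ∀ j, (p:T)^j = 0 → n ≤ j := fun j hj => Nat.find_le hj
  have hn1 : 1 ≤ n := by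
    by_contra h
    have : n = 0 := by omega
    rw [this, pow_zero] at hn0
    exact one_ne_zero hn0
  have hchar : ringChar T = p^n := by
    apply Nat.dvd_antisymm
    · exact ringChar.dvd (by push_cast; exact hn0)
    · exact (my_char_iff hloc hp hn0 hmin _).mp (ringChar.spec T (ringChar T) |>.mpr dvd_rfl)
  refine ⟨n, hn1, hchar, ?_⟩
  intro Jc
  obtain ⟨b, hbn, hJb⟩ := my_ideal_classify hloc hnil hn0 Jc
  rw [hJb, my_exponent hloc hp hnil hn0 hmin hbn]
  exact pow_dvd_pow p (by omega)

end Component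

section Product

variable {N : ℕ} {S : Fin N → Type*} [∀ i, CommRing (S i)] [∀ i, Fintype (S i)]

lemma my_pi_mem_iff (W : Ideal (∀ i, S i)) (x : ∀ i, S i) :
    x ∈ W ↔ ∀ i, x i ∈ W.map (Pi.evalRingHom S i) := by
  constructor
  · exact fun hx i => mem_map_of_mem _ hx
  · intro hx
    have hsurj : ∀ i, Function.Surjective (Pi.evalRingHom S i) := fun i z =>
      ⟨Pi.single i z, by simp⟩
    have hxsum : x = ∑ i, Pi.single i (x i) := (Finset.univ_sum_single x).symm
    rw [hxsum]
    apply Ideal.sum_mem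
    intro i _
    obtain ⟨w, hw, hwi⟩ := (Ideal.mem_map_iff_of_surjective _ (hsurj i)).mp (hx i)
    have hsm : Pi.single i (x i) = Pi.single i 1 * w := by
      funext j
      by_cases hij : j = i
      · subst hij
        simp only [Pi.mul_apply, Pi.single_eq_same, one_mul]
        exact (hwi ▸ rfl : x j = w j).symm ▸ rfl
      · simp [Pi.single_apply, hij]
    rw [hsm]
    exact W.mul_mem_left _ hw

theorem my_product_facts
    (hGal : ∀ i, ∃ p : ℕ, p.Prime ∧ IsLocalRing (S i) ∧ nilradical (S i) = Ideal.span {(p : S i)})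
    (hcop : ∀ i j, i ≠ j → Nat.Coprime (ringChar (S i)) (ringChar (S j)))
    (hodd : Odd (ringChar (∀ i, S i)))
    (J I : Ideal (∀ i, S i)) (hJI : J ≤ I) (hI : I ≤ Ideal.jacobson ⊥) :
    (∀ x, ((AddMonoid.exponent ↥J : ℕ) : ∀ i, S i) * x = 0 ↔ x ∈ J) ∧
    (∀ j ∈ J, (1+j)^(AddMonoid.exponent ↥J) = 1) ∧
    (∀ y ∈ I, ∃ x ∈ I, (1+x)^(AddMonoid.exponent ↥J) = 1 + ((AddMonoid.exponent ↥J : ℕ) : ∀ i, S i)*y) := by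
  classical
  set c := AddMonoid.exponent ↥J with hcdef
  choose p hp hloc hnil using hGal
  have hchar := fun i => my_ringChar_eq (hloc i) (hp i) (hnil i)
  choose nn hnn1 hnchar hexpdvd using hchar
  have hpodd : ∀ i, Odd (p i) := by
    intro i
    have h1 : ((ringChar (∀ j, S j) : ℕ) : S i) = 0 := by
      have h0 := CharP.cast_eq_zero (∀ j, S j) (ringChar (∀ j, S j))
      calc ((ringChar (∀ j, S j) : ℕ) : S i)
          = ((ringChar (∀ j, S j) : ℕ) : ∀ j, S j) i := (Pi.natCast_apply _ _).symm
        _ = 0 := by rw [h0]; rfl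
    have h2 : ringChar (S i) ∣ ringChar (∀ j, S j) := ringChar.dvd h1
    have h3 : p i ∣ ringChar (∀ j, S j) := by
      refine dvd_trans ?_ h2
      rw [hnchar i]
      exact dvd_pow_self _ (by have := hnn1 i; omega)
    rcases Nat.even_or_odd (p i) with he | ho
    · exfalso
      have hev : Even (ringChar (∀ j, S j)) := (even_iff_two_dvd).mpr (dvd_trans he.two_dvd h3)
      exact (Nat.not_even_iff_odd.mpr hodd) hev
    · exact ho
  have hsurj : ∀ i, Function.Surjective (Pi.evalRingHom S i) := fun i z => ⟨Pi.single i z, by simp⟩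
  set Ji := fun i => J.map (Pi.evalRingHom S i) with hJidef
  set Ii := fun i => I.map (Pi.evalRingHom S i) with hIidef
  have hJIi : ∀ i, Ji i ≤ Ii i := fun i => Ideal.map_mono hJI
  have hIs : ∀ i, Ii i ≤ span {(p i : S i)} := by
    intro i z hz
    obtain ⟨w, hw, hwi⟩ := (Ideal.mem_map_iff_of_surjective _ (hsurj i)).mp hz
    have hji : w i ∈ Ideal.jacobson (⊥ : Ideal (S i)) := by
      rw [Ideal.mem_jacobson_bot]
      intro y
      have hw' := Ideal.mem_jacobson_bot.mp (hI hw) (Pi.single i y)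
      have h4 : IsUnit ((w * Pi.single i y + 1) i) :=
        (Pi.evalRingHom S i).isUnit_map hw'
      simpa using h4
    haveI := hloc i
    rw [IsLocalRing.jacobson_eq_maximalIdeal ⊥ bot_ne_top,
      my_maximalIdeal_eq (hloc i) (hnil i)] at hji
    rw [← hwi]; exact hji
  have hJs : ∀ i, Ji i ≤ span {(p i : S i)} := fun i => (hJIi i).trans (hIs i)
  set ci := fun i => AddMonoid.exponent ↥(Ji i) with hcidef
  have hcidvd : ∀ i, ci i ∣ c := by
    intro i
    apply AddMonoid.exponent_dvd_of_forall_nsmul_eq_zero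
    rintro ⟨z, hz⟩
    obtain ⟨w, hw, hwi⟩ := (Ideal.mem_map_iff_of_surjective _ (hsurj i)).mp hz
    have h1 : c • (⟨w, hw⟩ : ↥J) = 0 := AddMonoid.exponent_nsmul_eq_zero _
    have h2 : c • w = 0 := congrArg Subtype.val h1
    apply Subtype.ext
    show c • z = 0
    rw [← hwi]
    calc c • w i = (c • w) i := rfl
      _ = 0 := by rw [h2]; rfl
  have hcipos : ∀ i, ci i ≠ 0 := by
    intro i h0
    have hdd : ci i ∣ p i ^ nn i := hexpdvd i (Ji i)
    rw [h0] at hdd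
    exact pow_ne_zero (nn i) (hp i).pos.ne' (zero_dvd_iff.mp hdd)
  have hcdvd : ∀ i, c ∣ ci i * ∏ j ∈ Finset.univ.erase i, ci j := by
    intro i
    apply AddMonoid.exponent_dvd_of_forall_nsmul_eq_zero
    rintro ⟨w, hw⟩
    apply Subtype.ext
    show ((ci i * ∏ j ∈ Finset.univ.erase i, ci j) • w : ∀ j, S j) = 0
    funext j
    have hcj : ci j • (w j) = 0 := by
      have h5 := AddMonoid.exponent_nsmul_eq_zero
        (⟨w j, Ideal.mem_map_of_mem _ hw⟩ : ↥(Ji j))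
      exact congrArg Subtype.val h5
    have hdvd : ci j ∣ ci i * ∏ j' ∈ Finset.univ.erase i, ci j' := by
      by_cases hij : j = i
      · subst hij; exact dvd_mul_right _ _
      · exact (Finset.dvd_prod_of_mem _ (Finset.mem_erase.mpr ⟨hij, Finset.mem_univ j⟩)).mul_left _
    obtain ⟨k, hk⟩ := hdvd
    have h6 : ((ci i * ∏ j' ∈ Finset.univ.erase i, ci j') • w) j
        = ((ci i * ∏ j' ∈ Finset.univ.erase i, ci j') • (w j)) := rfl
    rw [h6, hk, nsmul_eq_mul]
    push_cast
    have h7 : (ci j : S j) * w j = 0 := by rw [← nsmul_eq_mul]; exact hcj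
    calc (ci j : S j) * (k : S j) * w j = (k : S j) * ((ci j : S j) * w j) := by ring
      _ = 0 := by rw [h7, mul_zero]
  have hmfacts : ∀ i, ∃ m, c = ci i * m ∧ Nat.Coprime m (p i) := by
    intro i
    refine ⟨c / ci i, (Nat.mul_div_cancel' (hcidvd i)).symm, ?_⟩
    have hmM : c / ci i ∣ ∏ j ∈ Finset.univ.erase i, ci j := by
      have h8 : ci i * (c / ci i) ∣ ci i * ∏ j ∈ Finset.univ.erase i, ci j := by
        rw [Nat.mul_div_cancel' (hcidvd i)]
        exact hcdvd i
      exact (mul_dvd_mul_iff_left (hcipos i)).mp h8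
    have hMcop : Nat.Coprime (∏ j ∈ Finset.univ.erase i, ci j) (p i) := by
      apply Nat.Coprime.prod_left
      intro j hj
      have hji' : j ≠ i := (Finset.mem_erase.mp hj).1
      have h9 : Nat.Coprime (ringChar (S j)) (ringChar (S i)) := hcop j i hji'
      have h10 : Nat.Coprime (ringChar (S j)) (p i) := by
        apply Nat.Coprime.coprime_dvd_right _ h9
        rw [hnchar i]
        exact dvd_pow_self _ (by have := hnn1 i; omega)
      apply Nat.Coprime.coprime_dvd_left _ h10
      rw [hnchar j]
      exact hexpdvd j (Ji j)
    exact Nat.Coprime.coprime_dvd_left hmM hMcop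
  choose mm hmm hmmp using hmfacts
  have hcomp := fun i => my_component (hloc i) (hp i) (hpodd i) (hnil i)
    (hJIi i) (hIs i) (hmm i) (hmmp i)
  refine ⟨?_, ?_, ?_⟩
  · intro x
    constructor
    · intro h
      rw [my_pi_mem_iff J x]
      intro i
      have hi : (c : S i) * x i = 0 := by
        have h11 := congrFun h i
        simpa using h11
      exact ((hcomp i).1 (x i)).mp hi
    · intro hx
      funext i
      have h12 := ((hcomp i).1 (x i)).mpr ((my_pi_mem_iff J x).mp hx i)
      simpa using h12
  · intro j hj
    funext i
    have h13 := (hcomp i).2.1 (j i) (Ideal.mem_map_of_mem _ hj)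
    simpa using h13
  · intro y hy
    have H : ∀ i, ∃ xi ∈ Ii i, (1+xi)^c = 1 + (c : S i) * (y i) :=
      fun i => (hcomp i).2.2 (y i) (Ideal.mem_map_of_mem _ hy)
    choose xi hxi hxe using H
    refine ⟨fun i => xi i, (my_pi_mem_iff I _).mpr (fun i => hxi i), ?_⟩
    funext i
    simpa using hxe i

end Product

section Transfer
variable {R R' : Type*} [CommRing R] [CommRing R']

lemma my_mem_map_equiv_iff (e : R ≃+* R') (W : Ideal R) (x : R) :
    e x ∈ W.map (e : R →+* R') ↔ x ∈ W := by
  constructor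
  · intro h
    obtain ⟨w, hw, hwx⟩ := (Ideal.mem_map_iff_of_surjective _ e.surjective).mp h
    rwa [← e.injective hwx]
  · exact fun h => Ideal.mem_map_of_mem _ h

lemma my_exponent_map_eq (e : R ≃+* R') (J : Ideal R) :
    AddMonoid.exponent ↥(J.map (e : R →+* R')) = AddMonoid.exponent ↥J := by
  apply Nat.dvd_antisymm
  · apply AddMonoid.exponent_dvd_of_forall_nsmul_eq_zero
    rintro ⟨y, hy⟩
    obtain ⟨x, hx, hxy⟩ := (Ideal.mem_map_iff_of_surjective _ e.surjective).mp hy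
    have h1 : AddMonoid.exponent ↥J • (⟨x, hx⟩ : ↥J) = 0 := AddMonoid.exponent_nsmul_eq_zero _
    have h2 : AddMonoid.exponent ↥J • x = 0 := congrArg Subtype.val h1
    apply Subtype.ext
    show AddMonoid.exponent ↥J • y = 0
    rw [← hxy, ← map_nsmul e, h2, map_zero]
  · apply AddMonoid.exponent_dvd_of_forall_nsmul_eq_zero
    rintro ⟨x, hx⟩
    set c' := AddMonoid.exponent ↥(J.map (e : R →+* R'))
    have h1 : c' • (⟨e x, Ideal.mem_map_of_mem _ hx⟩ : ↥(J.map (e : R →+* R'))) = 0 :=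
      AddMonoid.exponent_nsmul_eq_zero _
    have h2 : c' • e x = 0 := congrArg Subtype.val h1
    apply Subtype.ext
    show c' • x = 0
    apply e.injective
    rw [map_nsmul, h2, map_zero]

lemma my_ringChar_equiv (e : R ≃+* R') : ringChar R' = ringChar R := by
  apply Nat.dvd_antisymm
  · apply ringChar.dvd
    have h := ringChar.spec R (ringChar R) |>.mpr dvd_rfl
    calc ((ringChar R : ℕ) : R') = e ((ringChar R : ℕ) : R) := (map_natCast e _).symm
      _ = 0 := by rw [h, map_zero]
  · apply ringChar.dvd
    have h := ringChar.spec R' (ringChar R') |>.mpr dvd_rfl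
    calc ((ringChar R' : ℕ) : R) = e.symm ((ringChar R' : ℕ) : R') := (map_natCast e.symm _).symm
      _ = 0 := by rw [h, map_zero]

lemma my_jacobson_map_le (e : R ≃+* R') {I : Ideal R} (hI : I ≤ Ideal.jacobson ⊥) :
    I.map (e : R →+* R') ≤ Ideal.jacobson ⊥ := by
  intro z hz
  obtain ⟨w, hw, hwz⟩ := (Ideal.mem_map_iff_of_surjective _ e.surjective).mp hz
  rw [Ideal.mem_jacobson_bot]
  intro y
  have h1 := Ideal.mem_jacobson_bot.mp (hI hw) (e.symm y)
  have h2 : IsUnit (e (w * e.symm y + 1)) := e.toRingHom.isUnit_map h1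
  have h3 : e (w * e.symm y + 1) = z * y + 1 := by
    rw [map_add, e.map_mul, map_one, RingEquiv.apply_symm_apply, hwz]
  rwa [h3] at h2

end Transfer

section RFacts

theorem my_R_facts {R : Type*} [CommRing R] [Fintype R] (hCG : IsCGRing R)
    (hodd : Odd (ringChar R)) (J I : Ideal R) (hJI : J ≤ I) (hI : I ≤ Ideal.jacobson ⊥) :
    (∀ x, ((AddMonoid.exponent ↥J : ℕ) : R) * x = 0 ↔ x ∈ J) ∧
    (∀ j ∈ J, (1+j)^(AddMonoid.exponent ↥J) = 1) ∧
    (∀ y ∈ I, ∃ x ∈ I, (1+x)^(AddMonoid.exponent ↥J)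
      = 1 + ((AddMonoid.exponent ↥J : ℕ) : R)*y) := by
  obtain ⟨N, S, instR, instF, hGal, hcop, ⟨e⟩⟩ := hCG
  set J' := J.map (e : R →+* ∀ i, S i) with hJ'def
  set I' := I.map (e : R →+* ∀ i, S i) with hI'def
  have hexp : AddMonoid.exponent ↥J' = AddMonoid.exponent ↥J := my_exponent_map_eq e J
  have hodd' : Odd (ringChar (∀ i, S i)) := by rw [my_ringChar_equiv e]; exact hodd
  have hJI' : J' ≤ I' := Ideal.map_mono hJI
  have hIjac' : I' ≤ Ideal.jacobson ⊥ := my_jacobson_map_le e hI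
  have hGal' : ∀ i, ∃ p : ℕ, p.Prime ∧ IsLocalRing (S i) ∧
      nilradical (S i) = Ideal.span {(p : S i)} := hGal
  obtain ⟨Ha, Hb, Hc⟩ := my_product_facts hGal' hcop hodd' J' I' hJI' hIjac'
  rw [hexp] at Ha Hb Hc
  set c := AddMonoid.exponent ↥J with hcdef
  refine ⟨?_, ?_, ?_⟩
  · intro x
    have h1 : e (((c:ℕ) : R) * x) = ((c:ℕ) : ∀ i, S i) * e x := by
      rw [_root_.map_mul, map_natCast e]
    constructor
    · intro h
      have h2 : ((c:ℕ) : ∀ i, S i) * e x = 0 := by rw [← h1, h, map_zero]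
      exact (my_mem_map_equiv_iff e J x).mp ((Ha (e x)).mp h2)
    · intro hx
      have h2 := (Ha (e x)).mpr ((my_mem_map_equiv_iff e J x).mpr hx)
      apply e.injective
      rw [h1, h2, map_zero]
  · intro j hj
    apply e.injective
    simp only [map_pow, map_add, map_one]
    exact Hb (e j) ((my_mem_map_equiv_iff e J j).mpr hj)
  · intro y hy
    obtain ⟨x', hx', hxe⟩ := Hc (e y) ((my_mem_map_equiv_iff e I y).mpr hy)
    refine ⟨e.symm x', ?_, ?_⟩
    · exact (my_mem_map_equiv_iff e I (e.symm x')).mp (by rwa [e.apply_symm_apply])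
    · apply e.injective
      simp only [map_pow, map_add, map_one, _root_.map_mul, map_natCast, RingEquiv.apply_symm_apply]
      rw [hxe]

end RFacts

section Skeleton

variable {R : Type*} [CommRing R] [Fintype R]

theorem my_skeleton (K : Subgroup Rˣ) (hK : IsPureSet (((↑) : Rˣ → R) '' (K : Set Rˣ)))
    (J : Ideal R) (hJ : J ≤ Ideal.jacobson (⊥ : Ideal R))
    (HR : ∀ I : Ideal R, J ≤ I → I ≤ Ideal.jacobson ⊥ →
      (∀ x, ((AddMonoid.exponent ↥J : ℕ) : R) * x = 0 ↔ x ∈ J) ∧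
      (∀ j ∈ J, (1+j)^(AddMonoid.exponent ↥J) = 1) ∧
      (∀ y ∈ I, ∃ x ∈ I, (1+x)^(AddMonoid.exponent ↥J)
        = 1 + ((AddMonoid.exponent ↥J : ℕ) : R)*y)) :
    IsPureSet ((fun x : R => Ideal.Quotient.mk J x) '' (((↑) : Rˣ → R) '' (K : Set Rˣ))) ∧
    IsPureSet ((fun x : R => ((AddMonoid.exponent J : ℕ) : R) * x) ''
      (((↑) : Rˣ → R) '' (K : Set Rˣ))) := by
  classical
  set c := AddMonoid.exponent ↥J with hcdef
  set Kset := ((↑) : Rˣ → R) '' (K : Set Rˣ) with hKsetdef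
  set Q := Ideal.Quotient.mk J with hQdef
  have h1K : (1 : R) ∈ Kset := ⟨1, K.one_mem, Units.val_one⟩
  have part1 : IsPureSet ((fun x : R => Q x) '' Kset) := by
    intro Ibar hIbar
    set I := Ideal.comap Q Ibar with hIdef
    have hJleI : J ≤ I := by
      intro x hx
      show Q x ∈ Ibar
      rw [Ideal.Quotient.eq_zero_iff_mem.mpr hx]
      exact Ibar.zero_mem
    have hmemX : ∀ z ∈ I, ∃ k ∈ Kset, Q k = 1 + Q z := by
      intro z hz
      have hmem : (1 : R ⧸ J) + Q z ∈ ((fun x : R => Q x) '' Kset) + (Ibar : Set (R ⧸ J)) := by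
        exact Set.add_mem_add ⟨1, h1K, map_one Q⟩ hz
      rw [hIbar] at hmem
      obtain ⟨k, hk, hkq⟩ := hmem
      exact ⟨k, hk, hkq⟩
    have hIjac : I ≤ Ideal.jacobson ⊥ := by
      intro x hx
      rw [Ideal.mem_jacobson_bot]
      intro y
      obtain ⟨k, hkK, hkq⟩ := hmemX (x*y) (I.mul_mem_right y hx)
      have hjmem : x*y + 1 - k ∈ J := by
        apply Ideal.Quotient.eq_zero_iff_mem.mp
        have hkq' : Q k = 1 + Q (x*y) := hkq
        rw [← hQdef, map_sub, map_add, map_one, hkq']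
        ring
      obtain ⟨u, huK, huk⟩ := hkK
      have hnil : IsNilpotent ((↑u⁻¹ : R) * (x*y+1-k)) :=
        my_nilpotent_of_mem_jacobson (hJ (J.mul_mem_left _ hjmem))
      have hunit2 : IsUnit (1 + (↑u⁻¹ : R) * (x*y+1-k)) := hnil.isUnit_one_add
      have heq : x*y+1 = ↑u * (1 + (↑u⁻¹:R)*(x*y+1-k)) := by
        rw [mul_add, mul_one, ← mul_assoc, Units.mul_inv, one_mul, huk]
        ring
      rw [heq]
      exact u.isUnit.mul hunit2
    obtain ⟨Ha, Hb, Hc⟩ := HR I hJleI hIjac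
    have hkey : ∀ y ∈ I, 1 + ((c:ℕ):R)*y ∈ Kset := by
      intro y hy
      obtain ⟨x, hxI, hxe⟩ := Hc y hy
      obtain ⟨k, hkK, hkq⟩ := hmemX x hxI
      have hjmem : k - (1+x) ∈ J := by
        apply Ideal.Quotient.eq_zero_iff_mem.mp
        have hkq' : Q k = 1 + Q x := hkq
        rw [← hQdef, map_sub, map_add, map_one, hkq']
        ring
      have hxnil : IsNilpotent x := my_nilpotent_of_mem_jacobson (hIjac hxI)
      obtain ⟨v, hv⟩ := hxnil.isUnit_one_add
      have hj2 : (↑v⁻¹ : R) * (k - (1+x)) ∈ J := J.mul_mem_left _ hjmem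
      have hk_eq : k = (1+x) * (1 + (↑v⁻¹:R)*(k - (1+x))) := by
        rw [mul_add, mul_one, ← hv, ← mul_assoc, Units.mul_inv, one_mul]
        ring
      have hkc : k^c = 1 + ((c:ℕ):R)*y := by
        rw [hk_eq, mul_pow, Hb _ hj2, mul_one, hxe]
      obtain ⟨u, huK, huk⟩ := hkK
      have hmem2 : k^c ∈ Kset := by
        refine ⟨u^c, K.pow_mem huK c, ?_⟩
        rw [Units.val_pow_eq_pow_val, huk]
      rwa [hkc] at hmem2
    set f := (LinearMap.lsmul R R) (((c:ℕ)) : R) with hfdef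
    set I₀ : Ideal R := Submodule.map f I with hI₀def
    have hfy : ∀ y : R, f y = ((c:ℕ):R) * y := fun y => by
      rw [hfdef, LinearMap.lsmul_apply, smul_eq_mul]
    have hKI₀ : Kset + (I₀ : Set R) = Kset := by
      apply Set.Subset.antisymm
      · intro w hw
        rw [Set.mem_add] at hw
        obtain ⟨kk, hkk, z, hz, hwsum⟩ := hw
        obtain ⟨y, hyI, hyz⟩ := Submodule.mem_map.mp hz
        obtain ⟨u, huK, huk⟩ := hkk
        have hy' : (↑u⁻¹ : R) * y ∈ I := I.mul_mem_left _ hyI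
        obtain ⟨w₁, hw₁K, hw₁⟩ := hkey _ hy'
        refine ⟨u * w₁, K.mul_mem huK hw₁K, ?_⟩
        rw [Units.val_mul, hw₁, ← hwsum, ← hyz, hfy y, ← huk]
        rw [mul_add, mul_one, ← mul_assoc, mul_comm (↑u : R) ((c:ℕ):R), mul_assoc,
          ← mul_assoc (↑u : R), Units.mul_inv, one_mul]
      · intro k hk
        have h0 : (0:R) ∈ (I₀ : Set R) := I₀.zero_mem
        have := Set.add_mem_add hk h0
        rwa [add_zero] at this
    have hI₀bot : I₀ = ⊥ := hK I₀ hKI₀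
    have hIJ : I ≤ J := by
      intro y hy
      have hmem3 : f y ∈ I₀ := Submodule.mem_map_of_mem hy
      rw [hI₀bot] at hmem3
      have h0 : ((c:ℕ):R) * y = 0 := by
        rw [← hfy y]
        exact (Submodule.mem_bot R).mp hmem3
      exact (Ha y).mp h0
    have hIbareq : Ibar = Ideal.map Q I :=
      (Ideal.map_comap_of_surjective Q Ideal.Quotient.mk_surjective Ibar).symm
    rw [hIbareq, ← le_bot_iff]
    calc Ideal.map Q I ≤ Ideal.map Q J := Ideal.map_mono hIJ
      _ = ⊥ := by rw [hQdef]; exact Ideal.map_quotient_self J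
  constructor
  · exact part1
  · intro I hI2
    obtain ⟨Ha, Hb, _⟩ := HR J le_rfl hJ
    set f := (LinearMap.lsmul R R) (((c:ℕ)) : R) with hfdef
    have hfy : ∀ y : R, f y = ((c:ℕ):R) * y := fun y => by
      rw [hfdef, LinearMap.lsmul_apply, smul_eq_mul]
    set I' : Ideal R := Submodule.comap f I with hI'def
    have hQmap : ((fun x : R => Q x) '' Kset) + ((Ideal.map Q I') : Set (R ⧸ J))
        = (fun x : R => Q x) '' Kset := by
      apply Set.Subset.antisymm
      · intro w hw
        rw [Set.mem_add] at hw
        obtain ⟨qk, ⟨k, hkK, rfl⟩, b, hb, hwsum⟩ := hw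
        obtain ⟨x, hxI', rfl⟩ :=
          (Ideal.mem_map_iff_of_surjective Q Ideal.Quotient.mk_surjective).mp hb
        have hcx : ((c:ℕ):R) * x ∈ I := by
          have := hxI'
          rwa [hI'def, Submodule.mem_comap, hfy x] at this
        have hck : ((c:ℕ):R) * k ∈ (fun x : R => ((c:ℕ):R) * x) '' Kset := ⟨k, hkK, rfl⟩
        have hmem4 : ((c:ℕ):R) * k + ((c:ℕ):R) * x
            ∈ ((fun x : R => ((c:ℕ):R) * x) '' Kset) + (I : Set R) :=
          Set.add_mem_add hck hcx
        rw [hI2] at hmem4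
        obtain ⟨k', hk'K, hk'⟩ := hmem4
        have hk'' : ((c:ℕ):R) * k' = ((c:ℕ):R)*k + ((c:ℕ):R)*x := hk'
        have hdiff : ((c:ℕ):R) * (k + x - k') = 0 := by
          rw [mul_sub, mul_add, ← hk'']
          ring
        have hJ5 : k + x - k' ∈ J := (Ha _).mp hdiff
        have hQ5 : Q k + Q x = Q k' := by
          have h6 : Q (k + x - k') = 0 := Ideal.Quotient.eq_zero_iff_mem.mpr hJ5
          rw [map_sub, map_add, sub_eq_zero] at h6
          exact h6
        rw [← hwsum, hQ5]
        exact ⟨k', hk'K, rfl⟩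
      · intro w hw
        have h0 : (0:R⧸J) ∈ ((Ideal.map Q I') : Set (R ⧸ J)) := (Ideal.map Q I').zero_mem
        have := Set.add_mem_add hw h0
        rwa [add_zero] at this
    have hmapbot : Ideal.map Q I' = ⊥ := part1 _ hQmap
    rw [eq_bot_iff]
    intro i hi
    have hcK : ((c:ℕ):R) * 1 ∈ (fun x : R => ((c:ℕ):R) * x) '' Kset := ⟨1, h1K, rfl⟩
    have hmem7 : ((c:ℕ):R) * 1 + i ∈ ((fun x : R => ((c:ℕ):R) * x) '' Kset) + (I : Set R) :=
      Set.add_mem_add hcK hi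
    rw [hI2] at hmem7
    obtain ⟨k', hk'K, hk'⟩ := hmem7
    have hk'' : ((c:ℕ):R) * k' = ((c:ℕ):R)*1 + i := hk'
    have hx : (k' - 1) ∈ I' := by
      rw [hI'def, Submodule.mem_comap, hfy]
      have : ((c:ℕ):R) * (k' - 1) = i := by
        rw [mul_sub, hk'']
        ring
      rw [this]
      exact hi
    have hQx : Q (k' - 1) ∈ Ideal.map Q I' := Ideal.mem_map_of_mem Q hx
    rw [hmapbot] at hQx
    have hJx : k' - 1 ∈ J := by
      rw [Submodule.mem_bot] at hQx
      exact Ideal.Quotient.eq_zero_iff_mem.mp hQx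
    have h0 : ((c:ℕ):R) * (k' - 1) = 0 := (Ha _).mpr hJx
    have : i = 0 := by
      have h8 : ((c:ℕ):R) * (k' - 1) = i := by
        rw [mul_sub, hk'']
        ring
      rw [← h8, h0]
    rw [this]
    exact (⊥ : Ideal R).zero_mem

end Skeleton

/-- Over a CG-ring of odd characteristic: if `K ≤ R^×` is pure and `J` is an ideal
with `J_p ≠ R_p` for all `p` (i.e. `J` contained in the radical), then the image of
`K` in `R/J` is pure, and the set `c_J·K` is pure, `c_J` the characteristic
(additive exponent) of `J`. -/
theorem pure_subgroup_quotient_and_multiple_pure {R : Type*} [CommRing R] [Fintype R]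
    (hCG : IsCGRing R) (hodd : Odd (ringChar R))
    (K : Subgroup Rˣ) (hK : IsPureSet (((↑) : Rˣ → R) '' (K : Set Rˣ)))
    (J : Ideal R) (hJ : J ≤ Ideal.jacobson (⊥ : Ideal R)) :
    IsPureSet ((fun x : R => Ideal.Quotient.mk J x) '' (((↑) : Rˣ → R) '' (K : Set Rˣ))) ∧
    IsPureSet ((fun x : R => ((AddMonoid.exponent J : ℕ) : R) * x) ''
      (((↑) : Rˣ → R) '' (K : Set Rˣ))) := by
  exact my_skeleton K hK J hJ (fun I hJI hI => my_R_facts hCG hodd J I hJI hI)
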